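/- For every n ≥ 2 and every s with 2 ≤ s ≤ n, RS(n,s) ≤ R(n,s), where R and RS are the explicit binomial sums defined in the context. -/

import Mathlib

open Finset

/-- The number `R(n,s)` of type I/III R-decompositions with `n` crossings and
`s` Seifert circles, given by the explicit binomial sum. Note that in natural
number arithmetic `⌈(s-1)/2⌉ = s/2`, `⌊(s-1)/2⌋ = (s-1)/2`, `⌊(s+1)/2⌋ = (s+1)/2`,
and `((-1)^s+1)/2` is `1` if `s` is even and `0` otherwise. -/
def Rcount (n s : ℕ) : ℕ :=
  ∑ j ∈ Finset.Icc 1 (min (s / 2) (n / 2 - (s - 1) / 2)),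
    Nat.choose (j + (s - 1) / 2 - 1) (2 * j - (if Even s then 1 else 0) - 1) *
      Nat.choose (n - j - (s + 1) / 2) (j + (s - 1) / 2 - 1)

/-- The number `RS(n,s)` of symmetric type III R-decompositions with `n` crossings
and `s` Seifert circles; it is `0` for odd `s`, and for `s = 2k` it is given by the
explicit binomial sum, where the indicator `((-1)^{(j+k)n}+1)/2` is `1` exactly when
`(j+k)*n` is even. Note `⌈(j+k)/2⌉ = (j+k+1)/2` in natural number arithmetic. -/
def RScount (n s : ℕ) : ℕ :=
  if Even s then
    ∑ j ∈ Finset.Icc 1 (min (s / 2) (n / 2 + 1 - s / 2)),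
      (if Even ((j + s / 2) * n) then 1 else 0) *
        (Nat.choose ((j + s / 2) / 2 - 1) (j - 1) *
          Nat.choose (n / 2 - (j + s / 2 + 1) / 2) ((j + s / 2) / 2 - 1))
  else 0

/-- For every `n ≥ 2` and every `s` with `2 ≤ s ≤ n`, `RS(n,s) ≤ R(n,s)`:
the symmetric R-decompositions form a subset of all type I/III R-decompositions. -/
lemma choose_le_choose_two_mul (p q : ℕ) : Nat.choose p q ≤ Nat.choose (2*p) (2*q) := by
  rcases le_or_gt q p with h | h
  · have hpos : 0 < Nat.choose p q := Nat.choose_pos h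
    calc Nat.choose p q ≤ Nat.choose p q * Nat.choose p q :=
          Nat.le_mul_of_pos_left _ hpos
      _ ≤ Nat.choose (2*p) (2*q) := by
          rw [two_mul p, Nat.add_choose_eq]
          have hmem : ((q, q) : ℕ × ℕ) ∈ Finset.HasAntidiagonal.antidiagonal (2 * q) :=
            Finset.HasAntidiagonal.mem_antidiagonal.mpr (by omega)
          exact Finset.single_le_sum
            (fun (i : ℕ × ℕ) _ => Nat.zero_le (Nat.choose p i.1 * Nat.choose p i.2)) hmem
  · simp [Nat.choose_eq_zero_of_lt h]

lemma key (n k j : ℕ) (hn : 2 ≤ n) (hk : 1 ≤ k) (hj : 1 ≤ j)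
    (hjk : j + k ≤ n / 2 + 1) (hev : Even ((j + k) * n)) :
    Nat.choose ((j + k) / 2 - 1) (j - 1) *
      Nat.choose (n / 2 - (j + k + 1) / 2) ((j + k) / 2 - 1) ≤
    Nat.choose (j + k - 2) (2 * j - 2) * Nat.choose (n - j - k) (j + k - 2) := by
  apply Nat.mul_le_mul
  · calc Nat.choose ((j + k) / 2 - 1) (j - 1)
        ≤ Nat.choose (2 * ((j + k) / 2 - 1)) (2 * (j - 1)) :=
          choose_le_choose_two_mul _ _
      _ ≤ Nat.choose (j + k - 2) (2 * (j - 1)) := Nat.choose_le_choose _ (by omega)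
      _ = Nat.choose (j + k - 2) (2 * j - 2) := by rw [(by omega : 2 * (j-1) = 2*j - 2)]
  · by_cases hm : Even (j + k)
    · obtain ⟨f, hf⟩ := hm
      have h1 : (j + k) / 2 - 1 = f - 1 := by omega
      have h2 : j + k - 2 = 2 * (f - 1) := by omega
      rw [h1, h2]
      calc Nat.choose (n / 2 - (j + k + 1) / 2) (f - 1)
          ≤ Nat.choose (2 * (n / 2 - (j + k + 1) / 2)) (2 * (f - 1)) :=
            choose_le_choose_two_mul _ _
        _ ≤ Nat.choose (n - j - k) (2 * (f - 1)) := Nat.choose_le_choose _ (by omega)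
    · have hne : Even n := by
        rcases Nat.even_mul.mp hev with h | h
        · exact absurd h hm
        · exact h
      obtain ⟨a, ha⟩ := hne
      have hm2 : (j + k) % 2 = 1 := Nat.odd_iff.mp (Nat.not_even_iff_odd.mp hm)
      obtain ⟨f, hf⟩ : ∃ f, j + k = 2 * f + 1 := ⟨(j + k) / 2, by omega⟩
      have hf1 : 1 ≤ f := by omega
      set B := n / 2 - (j + k + 1) / 2 with hB
      have h1 : (j + k) / 2 - 1 = f - 1 := by omega
      have h2 : n - j - k = 2 * B + 1 := by omega
      have h3 : j + k - 2 = 2 * (f - 1) + 1 := by omega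
      rw [h1, h2, h3, Nat.choose_succ_succ]
      exact le_trans (choose_le_choose_two_mul B (f - 1)) (Nat.le_add_right _ _)

theorem RScount_le_Rcount (n s : ℕ) (hn : 2 ≤ n) (hs2 : 2 ≤ s) (hsn : s ≤ n) :
    RScount n s ≤ Rcount n s := by
  by_cases hse : Even s
  · obtain ⟨k, hk⟩ := hse
    have hk' : s = 2 * k := by omega
    subst hk'
    have hse : Even (2 * k) := even_two_mul k
    rw [RScount, if_pos hse, Rcount]
    have hb : min (2 * k / 2) (n / 2 + 1 - 2 * k / 2)
        = min (2 * k / 2) (n / 2 - (2 * k - 1) / 2) := by omega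
    rw [hb]
    apply Finset.sum_le_sum
    intro j hj
    rw [Finset.mem_Icc] at hj
    have e0 : 2 * k / 2 = k := by omega
    have e1 : j + (2 * k - 1) / 2 - 1 = j + k - 2 := by omega
    have e2 : 2 * j - (if Even (2 * k) then 1 else 0) - 1 = 2 * j - 2 := by
      rw [if_pos hse]; omega
    have e3 : n - j - (2 * k + 1) / 2 = n - j - k := by omega
    rw [e1, e2, e3, e0]
    have e4 : (j + k) / 2 - 1 = (j + k) / 2 - 1 := rfl
    split_ifs with hev
    · rw [one_mul]
      have hjk : j + k ≤ n / 2 + 1 := by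
        have := hj.2
        omega
      exact key n k j hn (by omega) hj.1 hjk hev
    · simp
  · rw [RScount, if_neg hse]
    exact Nat.zero_le _
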